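/- arXiv:1912.04503 — 7 statements merged into one kernel-verified Lean document; each statement's English description precedes it below -/
import Mathlib

section
/- For all integers n ≥ 1 and d ≥ 2, the first half of the Hodge numbers is nondecreasing: h_j ≤ h_{j'} whenever 1 ≤ j ≤ j' ≤ ⌊nd/2⌋. -/
/-- The Hodge number `h_j` of the simplex `Simp(n,d)`: the number of points
`u ∈ ℤ^n` with `0 < u i < d` for all `i` and `∑ i, u i = j`. -/
noncomputable def hodge (n d : ℕ) (j : ℤ) : ℕ :=
  ((Fintype.piFinset fun _ : Fin n => Finset.Icc (1 : ℤ) ((d : ℤ) - 1)).filter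
    fun u => ∑ i, u i = j).card

lemma hodge_symm (n d : ℕ) (j : ℤ) : hodge n d j = hodge n d (n * d - j) := by
  unfold hodge
  apply Finset.card_nbij' (fun u i => (d : ℤ) - u i) (fun u i => (d : ℤ) - u i)
  · intro u hu
    simp only [Finset.mem_coe, Finset.mem_filter, Fintype.mem_piFinset, Finset.mem_Icc] at hu ⊢
    constructor
    · intro i; have := hu.1 i; omega
    · rw [Finset.sum_sub_distrib, hu.2]; simp
  · intro u hu
    simp only [Finset.mem_coe, Finset.mem_filter, Fintype.mem_piFinset, Finset.mem_Icc] at hu ⊢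
    constructor
    · intro i; have := hu.1 i; omega
    · rw [Finset.sum_sub_distrib, hu.2]; simp
  · intro u hu; funext i; simp
  · intro u hu; funext i; simp

lemma hodge_succ (n d : ℕ) (j : ℤ) :
    hodge (n + 1) d j = ∑ v ∈ Finset.Icc (1 : ℤ) ((d : ℤ) - 1), hodge n d (j - v) := by
  unfold hodge
  rw [Finset.card_eq_sum_card_fiberwise (f := fun u => u 0)
    (t := Finset.Icc (1 : ℤ) ((d : ℤ) - 1))
    (fun u hu => by
      simp only [Finset.mem_coe, Finset.mem_filter, Fintype.mem_piFinset] at hu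
      exact hu.1 0)]
  refine Finset.sum_congr rfl fun v hv => ?_
  simp only [Finset.mem_Icc] at hv
  apply Finset.card_nbij' (fun u => Fin.tail u) (fun u => Fin.cons v u)
  · intro u hu
    simp only [Finset.mem_coe, Finset.mem_filter, Fintype.mem_piFinset, Finset.mem_Icc] at hu ⊢
    obtain ⟨⟨h1, h2⟩, h3⟩ := hu
    refine ⟨fun i => h1 i.succ, ?_⟩
    have := Fin.sum_univ_succ u
    rw [this, h3] at h2
    simpa [Fin.tail] using by omega
  · intro u hu
    simp only [Finset.mem_coe, Finset.mem_filter, Fintype.mem_piFinset, Finset.mem_Icc] at hu ⊢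
    obtain ⟨h1, h2⟩ := hu
    refine ⟨⟨fun i => ?_, ?_⟩, by simp⟩
    · induction i using Fin.cases with
      | zero => simpa using hv
      | succ i => simpa using h1 i
    · rw [Fin.sum_univ_succ]
      simp [h2]
  · intro u hu
    simp only [Finset.mem_coe, Finset.mem_filter] at hu
    rw [← hu.2]
    exact Fin.cons_self_tail u
  · intro u hu; simp

lemma hodge_succ' (n d : ℕ) (j : ℤ) :
    hodge (n + 1) d j = ∑ w ∈ Finset.Icc (j - d + 1) (j - 1), hodge n d w := by
  rw [hodge_succ]
  apply Finset.sum_nbij' (fun v => j - v) (fun w => j - w) <;>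
    intros <;> simp_all [Finset.mem_Icc] <;> omega

lemma key (n d : ℕ) (hd : 2 ≤ d) (j : ℤ) :
    hodge (n + 1) d (j + 1) + hodge n d (j + 1 - d) = hodge (n + 1) d j + hodge n d j := by
  rw [hodge_succ', hodge_succ']
  have h1 : Finset.Icc (j + 1 - (d:ℤ) + 1) j = insert j (Finset.Icc (j + 1 - (d:ℤ) + 1) (j-1)) := by
    ext x; simp [Finset.mem_Icc, Finset.mem_insert]; omega
  have h2 : Finset.Icc (j - (d:ℤ) + 1) (j - 1) = insert (j - (d:ℤ) + 1) (Finset.Icc (j + 1 - (d:ℤ) + 1) (j-1)) := by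
    ext x; simp [Finset.mem_Icc, Finset.mem_insert]; omega
  have e1 : j + 1 - 1 = j := by ring
  rw [e1, h1, h2, Finset.sum_insert (by simp [Finset.mem_Icc]),
    Finset.sum_insert (by simp [Finset.mem_Icc])]
  have e2 : j - (d:ℤ) + 1 = j + 1 - d := by ring
  rw [e2]; omega

lemma hodge_mono_of_step (n d : ℕ)
    (step : ∀ j : ℤ, 2 * (j + 1) ≤ (n : ℤ) * d → hodge n d j ≤ hodge n d (j + 1)) :
    ∀ (k : ℕ) (j : ℤ), 2 * (j + k) ≤ (n : ℤ) * d → hodge n d j ≤ hodge n d (j + k) := by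
  intro k
  induction k with
  | zero => simp
  | succ k ih =>
    intro j hj
    push_cast at hj
    have h1 : hodge n d j ≤ hodge n d (j + k) := ih j (by push_cast; omega)
    have h2 : hodge n d (j + k) ≤ hodge n d (j + k + 1) := step (j + k) (by omega)
    have e : (j + ((k : ℤ) + 1)) = j + k + 1 := by ring
    push_cast
    rw [e]
    exact h1.trans h2

lemma hodge_mono_aux (n d : ℕ)
    (step : ∀ j : ℤ, 2 * (j + 1) ≤ (n : ℤ) * d → hodge n d j ≤ hodge n d (j + 1))
    (j j' : ℤ) (hle : j ≤ j') (h : 2 * j' ≤ (n : ℤ) * d) :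
    hodge n d j ≤ hodge n d j' := by
  have e : j' = j + ((j' - j).toNat : ℤ) := by omega
  rw [e] at h ⊢
  exact hodge_mono_of_step n d step _ j h

lemma hodge_step (d : ℕ) (hd : 2 ≤ d) :
    ∀ (n : ℕ) (j : ℤ), 2 * (j + 1) ≤ (n : ℤ) * d → hodge n d j ≤ hodge n d (j + 1) := by
  intro n
  induction n with
  | zero =>
    intro j hj
    simp only [Nat.cast_zero, zero_mul] at hj
    have h0 : hodge 0 d j = 0 := by
      rw [hodge, Finset.card_eq_zero, Finset.filter_eq_empty_iff]
      intro u _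
      simp only [Finset.univ_eq_empty, Finset.sum_empty]
      omega
    omega
  | succ n ih =>
    intro j hj
    have hd' : (2 : ℤ) ≤ d := by exact_mod_cast hd
    push_cast at hj
    have hb : ((n : ℤ) + 1) * d = (n : ℤ) * d + d := by ring
    rw [hb] at hj
    have hk := key n d hd j
    have hle : hodge n d (j + 1 - d) ≤ hodge n d j := by
      by_cases hc : 2 * j ≤ (n : ℤ) * d
      · exact hodge_mono_aux n d ih _ _ (by omega) hc
      · rw [hodge_symm n d j]
        exact hodge_mono_aux n d ih _ _ (by omega) (by omega)
    omega

/-- The first half of the Hodge numbers is nondecreasing: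
`h_j ≤ h_{j'}` whenever `1 ≤ j ≤ j' ≤ ⌊nd/2⌋`. -/
theorem hodge_mono (n d : ℕ) (hn : 1 ≤ n) (hd : 2 ≤ d) (j j' : ℤ)
    (h1 : 1 ≤ j) (h2 : j ≤ j') (h3 : j' ≤ (n : ℤ) * d / 2) :
    hodge n d j ≤ hodge n d j' := by
  exact hodge_mono_aux n d (hodge_step d hd n) j j' h2 (by omega)
end

section
/- For all integers n ≥ 1, d ≥ 2 and every integer i with 0 ≤ i ≤ nd and i ≢ 0 (mod d), the arithmetic Hodge sums satisfy H_i + H_{nd−i−d} = ((d−1)^n − (−1)^n)/d. -/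
/-- The arithmetic Hodge sum `H_i := Σ_{j=0}^{⌊i/d⌋} h_{i−jd}`, with `H_i = 0` for `i < 0`. -/
noncomputable def Hsum (n d : ℕ) (i : ℤ) : ℤ :=
  if i < 0 then 0
  else ∑ j ∈ Finset.range ((i / d).toNat + 1), (hodge n d (i - (j : ℤ) * d) : ℤ)

/-- The box `{1,…,d-1}^n`. -/
noncomputable def auxBox (n d : ℕ) : Finset (Fin n → ℤ) :=
  Fintype.piFinset fun _ : Fin n => Finset.Icc (1 : ℤ) ((d : ℤ) - 1)

lemma aux_mem_box {n d : ℕ} {u : Fin n → ℤ} :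
    u ∈ auxBox n d ↔ ∀ k, 1 ≤ u k ∧ u k ≤ (d : ℤ) - 1 := by
  simp [auxBox, Fintype.mem_piFinset, Finset.mem_Icc]

lemma aux_sum_ge {n d : ℕ} {u : Fin n → ℤ} (hu : u ∈ auxBox n d) :
    (n : ℤ) ≤ ∑ k, u k := by
  calc (n : ℤ) = ∑ _k : Fin n, (1 : ℤ) := by simp
    _ ≤ ∑ k, u k :=
      Finset.sum_le_sum fun k _ => (aux_mem_box.mp hu k).1

/-- `Hsum` as a cardinality. -/
lemma aux_Hsum_eq_card (n d : ℕ) (hn : 1 ≤ n) (hd : 2 ≤ d) (i : ℤ) :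
    Hsum n d i = (((auxBox n d).filter
      fun u => ∑ k, u k ≤ i ∧ (d : ℤ) ∣ (i - ∑ k, u k)).card : ℤ) := by
  have hdpos : (0 : ℤ) < d := by exact_mod_cast lt_of_lt_of_le two_pos hd
  by_cases hneg : i < 0
  · rw [Hsum, if_pos hneg]
    rw [Finset.filter_false_of_mem, Finset.card_empty]
    · simp
    · intro u hu h
      have h1 : (1 : ℤ) ≤ ∑ k, u k := le_trans (by exact_mod_cast hn) (aux_sum_ge hu)
      omega
  · push_neg at hneg
    rw [Hsum, if_neg (not_lt.mpr hneg)]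
    have key : ((auxBox n d).filter
        fun u => ∑ k, u k ≤ i ∧ (d : ℤ) ∣ (i - ∑ k, u k)).card
        = ∑ j ∈ Finset.range ((i / d).toNat + 1),
            (((auxBox n d).filter
              fun u => ∑ k, u k ≤ i ∧ (d : ℤ) ∣ (i - ∑ k, u k)).filter
              fun u => ((i - ∑ k, u k) / d).toNat = j).card := by
      apply Finset.card_eq_sum_card_fiberwise
      intro u hu
      rw [Finset.mem_coe, Finset.mem_filter] at hu
      obtain ⟨hu1, hu2, hu3⟩ := hu
      rw [Finset.mem_coe, Finset.mem_range]
      have h1 : (1 : ℤ) ≤ ∑ k, u k := le_trans (by exact_mod_cast hn) (aux_sum_ge hu1)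
      have h0 : 0 ≤ i - ∑ k, u k := by omega
      have hle : (i - ∑ k, u k) / d ≤ i / d := Int.ediv_le_ediv hdpos (by omega)
      have h2 : 0 ≤ (i - ∑ k, u k) / d := Int.ediv_nonneg h0 (le_of_lt hdpos)
      have h3 : 0 ≤ i / d := Int.ediv_nonneg hneg (le_of_lt hdpos)
      beta_reduce
      omega
    rw [key, Nat.cast_sum]
    clear key
    apply Finset.sum_congr rfl
    intro j hj
    rw [Finset.mem_range] at hj
    have hjle : (j : ℤ) * d ≤ i := by
      have h1 : (j : ℤ) ≤ i / d := by
        have h3 : 0 ≤ i / d := Int.ediv_nonneg hneg (le_of_lt hdpos)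
        have : (j : ℤ) ≤ ((i / d).toNat : ℤ) := by exact_mod_cast Nat.lt_succ_iff.mp hj
        omega
      calc (j : ℤ) * d ≤ (i / d) * d := mul_le_mul_of_nonneg_right h1 (le_of_lt hdpos)
        _ ≤ i := Int.ediv_mul_le i (ne_of_gt hdpos)
    congr 1
    rw [Finset.filter_filter]
    show hodge n d (i - (j : ℤ) * d)
      = ((auxBox n d).filter fun u =>
          (∑ k, u k ≤ i ∧ (d : ℤ) ∣ (i - ∑ k, u k)) ∧ ((i - ∑ k, u k) / d).toNat = j).card
    rw [hodge]
    show ((auxBox n d).filter fun u => ∑ k, u k = i - (j : ℤ) * d).card = _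
    congr 1
    apply Finset.filter_congr
    intro u hu
    have h1 : (1 : ℤ) ≤ ∑ k, u k := le_trans (by exact_mod_cast hn) (aux_sum_ge hu)
    have hcomm : (d : ℤ) * j = (j : ℤ) * d := by ring
    have hjd0 : 0 ≤ (j : ℤ) * d := by positivity
    constructor
    · intro h
      refine ⟨⟨by omega, ⟨j, by omega⟩⟩, ?_⟩
      have : (i - ∑ k, u k) / d = j := by
        rw [show i - ∑ k, u k = (d : ℤ) * j by omega,
          Int.mul_ediv_cancel_left _ (ne_of_gt hdpos)]
      omega
    · rintro ⟨⟨hle, ⟨c, hc⟩⟩, htn⟩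
      have hdiv : (i - ∑ k, u k) / d = c := by
        rw [hc, Int.mul_ediv_cancel_left _ (ne_of_gt hdpos)]
      have hc0 : 0 ≤ c := by
        have h0 : 0 ≤ i - ∑ k, u k := by omega
        rw [← hdiv]; exact Int.ediv_nonneg h0 (le_of_lt hdpos)
      have hjc : (j : ℤ) = c := by omega
      have h9 : (d : ℤ) * c = (j : ℤ) * d := by rw [← hjc]; ring
      omega

/-- Reflection bijection `u ↦ d - u`. -/
lemma aux_card_flip (n d : ℕ) (i : ℤ) :
    ((auxBox n d).filter fun u =>
        ∑ k, u k ≤ (n : ℤ) * d - i - d ∧ (d : ℤ) ∣ ((n : ℤ) * d - i - d - ∑ k, u k)).card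
    = ((auxBox n d).filter fun u =>
        i + d ≤ ∑ k, u k ∧ (d : ℤ) ∣ (i - ∑ k, u k)).card := by
  have hsum : ∀ u : Fin n → ℤ, ∑ k, ((d : ℤ) - u k) = (n : ℤ) * d - ∑ k, u k := by
    intro u
    rw [Finset.sum_sub_distrib, Finset.sum_const, Finset.card_univ, Fintype.card_fin,
      nsmul_eq_mul]
  have hbox : ∀ u : Fin n → ℤ, u ∈ auxBox n d → (fun k => (d : ℤ) - u k) ∈ auxBox n d := by
    intro u hu
    rw [aux_mem_box] at hu ⊢
    intro k
    have := hu k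
    constructor <;> omega
  apply Finset.card_nbij' (fun u k => (d : ℤ) - u k) (fun u k => (d : ℤ) - u k)
  · intro u hu
    rw [Finset.mem_coe, Finset.mem_filter] at hu ⊢
    obtain ⟨hu1, hu2, hu3⟩ := hu
    refine ⟨hbox u hu1, ?_, ?_⟩
    · rw [hsum]; omega
    · rw [hsum]
      obtain ⟨c, hc⟩ := hu3
      exact ⟨-c - 1, by linarith⟩
  · intro u hu
    rw [Finset.mem_coe, Finset.mem_filter] at hu ⊢
    obtain ⟨hu1, hu2, hu3⟩ := hu
    refine ⟨hbox u hu1, ?_, ?_⟩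
    · rw [hsum]; omega
    · rw [hsum]
      obtain ⟨c, hc⟩ := hu3
      exact ⟨-c - 1, by linarith⟩
  · intro u _; funext k; ring
  · intro u _; funext k; ring

/-- Splitting the residue class by the threshold. -/
lemma aux_card_split (n d : ℕ) (hd : 2 ≤ d) (i : ℤ) :
    ((auxBox n d).filter fun u => ∑ k, u k ≤ i ∧ (d : ℤ) ∣ (i - ∑ k, u k)).card
    + ((auxBox n d).filter fun u => i + d ≤ ∑ k, u k ∧ (d : ℤ) ∣ (i - ∑ k, u k)).card
    = ((auxBox n d).filter fun u => (d : ℤ) ∣ (i - ∑ k, u k)).card := by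
  have hdpos : (0 : ℤ) < d := by exact_mod_cast lt_of_lt_of_le two_pos hd
  have h1 : ((auxBox n d).filter fun u => ∑ k, u k ≤ i ∧ (d : ℤ) ∣ (i - ∑ k, u k))
      = ((auxBox n d).filter fun u => (d : ℤ) ∣ (i - ∑ k, u k)).filter
          fun u => ∑ k, u k ≤ i := by
    rw [Finset.filter_filter]
    apply Finset.filter_congr
    intro u _
    constructor
    · rintro ⟨a, b⟩; exact ⟨b, a⟩
    · rintro ⟨a, b⟩; exact ⟨b, a⟩
  have h2 : ((auxBox n d).filter fun u => i + d ≤ ∑ k, u k ∧ (d : ℤ) ∣ (i - ∑ k, u k))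
      = ((auxBox n d).filter fun u => (d : ℤ) ∣ (i - ∑ k, u k)).filter
          fun u => ¬ ∑ k, u k ≤ i := by
    rw [Finset.filter_filter]
    apply Finset.filter_congr
    intro u _
    constructor
    · rintro ⟨a, b⟩; exact ⟨b, by clear h1; omega⟩
    · rintro ⟨b, a⟩
      refine ⟨?_, b⟩
      obtain ⟨c, hc⟩ := b
      clear h1
      have hcneg : c ≤ -1 := by nlinarith
      have h4 : (d : ℤ) * c ≤ (d : ℤ) * (-1) :=
        mul_le_mul_of_nonneg_left (by omega) (le_of_lt hdpos)
      omega
  rw [h1, h2]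
  exact Finset.card_filter_add_card_filter_not _

/-- The count of the box elements in a residue class. -/
lemma aux_count (d : ℕ) (hd : 2 ≤ d) :
    ∀ (n : ℕ) (i : ℤ),
    (d : ℤ) * ((auxBox n d).filter fun u => (d : ℤ) ∣ (i - ∑ k, u k)).card
      = ((d : ℤ) - 1) ^ n - (-1) ^ n + (if (d : ℤ) ∣ i then (d : ℤ) * (-1 : ℤ) ^ n else 0) := by
  have hdpos : (0 : ℤ) < d := by exact_mod_cast lt_of_lt_of_le two_pos hd
  intro n
  induction n with
  | zero =>
    intro i
    by_cases h : (d : ℤ) ∣ i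
    · rw [if_pos h]
      have heq : ((auxBox 0 d).filter fun u => (d : ℤ) ∣ (i - ∑ k, u k)) = auxBox 0 d := by
        apply Finset.filter_true_of_mem
        intro u _
        simpa using h
      rw [heq]
      have hcard : (auxBox 0 d).card = 1 := by
        simp [auxBox, Fintype.card_piFinset]
      rw [hcard]
      push_cast
      ring
    · rw [if_neg h]
      have heq : ((auxBox 0 d).filter fun u => (d : ℤ) ∣ (i - ∑ k, u k)) = ∅ := by
        apply Finset.filter_false_of_mem
        intro u _
        simpa using h
      rw [heq]
      simp
  | succ n ih =>
    intro i
    have key : ((auxBox (n + 1) d).filter fun u => (d : ℤ) ∣ (i - ∑ k, u k)).card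
        = ∑ c ∈ Finset.Icc (1 : ℤ) ((d : ℤ) - 1),
            (((auxBox (n + 1) d).filter fun u => (d : ℤ) ∣ (i - ∑ k, u k)).filter
              fun u => u 0 = c).card := by
      apply Finset.card_eq_sum_card_fiberwise
      intro u hu
      rw [Finset.mem_coe, Finset.mem_filter] at hu
      have := (aux_mem_box.mp hu.1) 0
      rw [Finset.mem_coe, Finset.mem_Icc]
      exact this
    have fib : ∀ c ∈ Finset.Icc (1 : ℤ) ((d : ℤ) - 1),
        ((((auxBox (n + 1) d).filter fun u => (d : ℤ) ∣ (i - ∑ k, u k)).filter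
          fun u => u 0 = c).card : ℤ)
        = (((auxBox n d).filter fun v => (d : ℤ) ∣ (i - c - ∑ k, v k)).card : ℤ) := by
      intro c hc
      rw [Finset.mem_Icc] at hc
      congr 1
      apply Finset.card_nbij' (fun u => Fin.tail u) (fun v => Fin.cons c v)
      · intro u hu
        simp only [Finset.mem_coe, Finset.mem_filter] at hu ⊢
        obtain ⟨⟨hu1, hu2⟩, hu3⟩ := hu
        constructor
        · rw [aux_mem_box] at hu1 ⊢
          intro k
          exact hu1 k.succ
        · have hss : ∑ k, u k = u 0 + ∑ k : Fin n, u k.succ := Fin.sum_univ_succ u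
          show (d : ℤ) ∣ i - c - ∑ k : Fin n, u k.succ
          rw [show i - c - ∑ k : Fin n, u k.succ = i - ∑ k, u k by rw [hss, hu3]; ring]
          exact hu2
      · intro v hv
        simp only [Finset.mem_coe, Finset.mem_filter] at hv ⊢
        obtain ⟨hv1, hv2⟩ := hv
        refine ⟨⟨?_, ?_⟩, ?_⟩
        · rw [aux_mem_box] at hv1 ⊢
          intro k
          refine Fin.cases ?_ ?_ k
          · simpa using hc
          · intro j
            simpa using hv1 j
        · have hss : ∑ k, Fin.cons (α := fun _ => ℤ) c v k
              = c + ∑ k : Fin n, v k := by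
            rw [Fin.sum_univ_succ]
            simp
          rw [hss, show i - (c + ∑ k, v k) = i - c - ∑ k, v k by ring]
          exact hv2
        · simp
      · intro u hu
        simp only [Finset.mem_coe, Finset.mem_filter] at hu
        rw [← hu.2]
        exact Fin.cons_self_tail u
      · intro v _
        funext k
        simp [Fin.tail]
    have hmod : ∀ c ∈ Finset.Icc (1 : ℤ) ((d : ℤ) - 1),
        ((if (d : ℤ) ∣ (i - c) then (d : ℤ) * (-1 : ℤ) ^ n else 0)
          = if c = i % d then (d : ℤ) * (-1 : ℤ) ^ n else 0) := by
      intro c hc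
      rw [Finset.mem_Icc] at hc
      clear key fib ih
      have hcmod : c % (d : ℤ) = c := Int.emod_eq_of_lt (by omega) (by omega)
      have hiff : ((d : ℤ) ∣ (i - c)) ↔ (c = i % d) := by
        constructor
        · intro hdvd
          have : i % (d : ℤ) = c % d :=
            Int.emod_eq_emod_iff_emod_sub_eq_zero.mpr (Int.emod_eq_zero_of_dvd hdvd)
          omega
        · intro hcm
          have h5 : i % (d : ℤ) = c % d := by omega
          exact Int.dvd_of_emod_eq_zero (Int.emod_eq_emod_iff_emod_sub_eq_zero.mp h5)
      exact if_congr hiff rfl rfl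
    have hIcccard : (Finset.Icc (1 : ℤ) ((d : ℤ) - 1)).card = d - 1 := by
      clear key fib hmod ih
      rw [Int.card_Icc]
      omega
    calc (d : ℤ) * ((auxBox (n + 1) d).filter fun u => (d : ℤ) ∣ (i - ∑ k, u k)).card
        = ∑ c ∈ Finset.Icc (1 : ℤ) ((d : ℤ) - 1),
            (d : ℤ) * ((((auxBox (n + 1) d).filter fun u => (d : ℤ) ∣ (i - ∑ k, u k)).filter
              fun u => u 0 = c).card : ℤ) := by
          rw [key]; push_cast; rw [Finset.mul_sum]
      _ = ∑ c ∈ Finset.Icc (1 : ℤ) ((d : ℤ) - 1),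
            (((d : ℤ) - 1) ^ n - (-1) ^ n
              + (if (d : ℤ) ∣ (i - c) then (d : ℤ) * (-1 : ℤ) ^ n else 0)) := by
          apply Finset.sum_congr rfl
          intro c hc
          rw [fib c hc]
          exact ih (i - c)
      _ = (((d : ℤ) - 1) * (((d : ℤ) - 1) ^ n - (-1) ^ n))
            + ∑ c ∈ Finset.Icc (1 : ℤ) ((d : ℤ) - 1),
                (if c = i % d then (d : ℤ) * (-1 : ℤ) ^ n else 0) := by
          rw [Finset.sum_add_distrib, Finset.sum_const, hIcccard]
          rw [Finset.sum_congr rfl hmod]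
          congr 1
          rw [nsmul_eq_mul]
          congr 1
          clear key fib hmod ih
          push_cast
          omega
      _ = (((d : ℤ) - 1) * (((d : ℤ) - 1) ^ n - (-1) ^ n))
            + (if i % d ∈ Finset.Icc (1 : ℤ) ((d : ℤ) - 1) then (d : ℤ) * (-1 : ℤ) ^ n else 0) := by
          rw [Finset.sum_ite_eq' (Finset.Icc (1 : ℤ) ((d : ℤ) - 1)) (i % d)
            (fun _ => (d : ℤ) * (-1 : ℤ) ^ n)]
      _ = ((d : ℤ) - 1) ^ (n + 1) - (-1) ^ (n + 1)
            + (if (d : ℤ) ∣ i then (d : ℤ) * (-1 : ℤ) ^ (n + 1) else 0) := by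
          clear key fib hmod
          have hmod0 : 0 ≤ i % (d : ℤ) := Int.emod_nonneg i (ne_of_gt hdpos)
          have hmodlt : i % (d : ℤ) < d := Int.emod_lt_of_pos i hdpos
          by_cases hdvd : (d : ℤ) ∣ i
          · have h7 : i % (d : ℤ) = 0 := Int.emod_eq_zero_of_dvd hdvd
            rw [if_neg (by rw [Finset.mem_Icc]; clear ih; omega), if_pos hdvd]
            ring
          · have h7 : i % (d : ℤ) ≠ 0 := fun h => hdvd (Int.dvd_of_emod_eq_zero h)
            rw [if_pos (by rw [Finset.mem_Icc]; clear ih; omega), if_neg hdvd]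
            ring

/-- Symmetry of arithmetic Hodge sums:
`H_i + H_{nd−i−d} = ((d−1)^n − (−1)^n)/d` for `0 ≤ i ≤ nd` with `d ∤ i`. -/
theorem Hsum_symm (n d : ℕ) (hn : 1 ≤ n) (hd : 2 ≤ d) (i : ℤ)
    (hi0 : 0 ≤ i) (hi1 : i ≤ (n : ℤ) * d) (hi : ¬ (d : ℤ) ∣ i) :
    Hsum n d i + Hsum n d ((n : ℤ) * d - i - d)
      = (((d : ℤ) - 1) ^ n - (-1) ^ n) / d := by
  have hdpos : (0 : ℤ) < d := by exact_mod_cast lt_of_lt_of_le two_pos hd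
  rw [aux_Hsum_eq_card n d hn hd, aux_Hsum_eq_card n d hn hd]
  rw [aux_card_flip n d i]
  have hsplit := aux_card_split n d hd i
  have hcount := aux_count d hd n i
  rw [if_neg hi, add_zero] at hcount
  have hcast : ((((auxBox n d).filter fun u => ∑ k, u k ≤ i ∧ (d : ℤ) ∣ (i - ∑ k, u k)).card : ℤ)
      + (((auxBox n d).filter fun u => i + d ≤ ∑ k, u k ∧ (d : ℤ) ∣ (i - ∑ k, u k)).card : ℤ))
      = (((auxBox n d).filter fun u => (d : ℤ) ∣ (i - ∑ k, u k)).card : ℤ) := by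
    exact_mod_cast congrArg (Nat.cast : ℕ → ℤ) hsplit
  rw [hcast, ← hcount, Int.mul_ediv_cancel_left _ (ne_of_gt hdpos)]
end

section
/- Let n ≥ 1, d ≥ 2 be integers and p a prime with gcd(p,d) = 1. For every integer j with 0 ≤ j ≤ nd such that (p−1)·j ≢ 0 (mod d), the Frobenius numbers satisfy the symmetry h_{nd−j,1} = h_{j,0} and h_{nd−j,0} = h_{j,1}. -/
open Finset

/-- The cube `{1,…,d-1}^n`. -/
private noncomputable def cubeS (n d : ℕ) : Finset (Fin n → ℤ) :=
  Fintype.piFinset fun _ : Fin n => Finset.Icc (1 : ℤ) ((d : ℤ) - 1)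

private lemma mem_cubeS {n d : ℕ} {u : Fin n → ℤ} (hu : u ∈ cubeS n d) (i : Fin n) :
    1 ≤ u i ∧ u i ≤ (d : ℤ) - 1 := by
  have := Fintype.mem_piFinset.mp hu i
  simpa [Finset.mem_Icc] using this

private lemma one_le_sum_cubeS {n d : ℕ} (hn : 1 ≤ n) {u : Fin n → ℤ} (hu : u ∈ cubeS n d) :
    (1 : ℤ) ≤ ∑ i, u i := by
  calc (1 : ℤ) ≤ (n : ℤ) := by exact_mod_cast hn
    _ = ∑ _i : Fin n, (1 : ℤ) := by simp
    _ ≤ ∑ i, u i := Finset.sum_le_sum fun i _ => (mem_cubeS hu i).1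

/-- `(x-1) % d + 1` is congruent to `x` mod `d`. -/
private lemma hmod_aux (d : ℕ) (x : ℤ) : (d : ℤ) ∣ ((x - 1) % d + 1) - x := by
  have h1 := Int.emod_add_mul_ediv (x - 1) d
  exact ⟨-((x - 1) / d), by linarith⟩

/-- `Hsum` as a cardinality. -/
private lemma Hsum_eq_card (n d : ℕ) (hn : 1 ≤ n) (hd : 1 ≤ d) (i : ℤ) :
    Hsum n d i = (((cubeS n d).filter
      fun u => (d : ℤ) ∣ i - ∑ k, u k ∧ ∑ k, u k ≤ i).card : ℤ) := by
  have hd0 : (0 : ℤ) < d := by exact_mod_cast hd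
  by_cases hi : i < 0
  · rw [Hsum, if_pos hi]
    symm
    norm_cast
    rw [Finset.card_eq_zero, Finset.filter_eq_empty_iff]
    intro u hu
    rintro ⟨-, hle⟩
    have := one_le_sum_cubeS hn hu
    linarith
  · push_neg at hi
    rw [Hsum, if_neg (not_lt.mpr hi)]
    set N := (i / d).toNat + 1 with hN
    have key : (((cubeS n d).filter
        fun u => (d : ℤ) ∣ i - ∑ k, u k ∧ ∑ k, u k ≤ i).card)
        = ∑ j ∈ Finset.range N, (((cubeS n d).filter
            fun u => (d : ℤ) ∣ i - ∑ k, u k ∧ ∑ k, u k ≤ i).filter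
              fun u => ((i - ∑ k, u k) / d).toNat = j).card := by
      apply Finset.card_eq_sum_card_fiberwise
      intro u hu
      simp only [Finset.mem_coe, Finset.mem_filter] at hu
      obtain ⟨hu, hdvd, hle⟩ := hu
      rw [Finset.mem_coe, Finset.mem_range]
      have h1 : (i - ∑ k, u k) / d ≤ i / d :=
        Int.ediv_le_ediv hd0 (by have := one_le_sum_cubeS hn hu; linarith)
      have h2 := Int.toNat_le_toNat h1
      beta_reduce
      omega
    have main : ∀ j ∈ Finset.range N,
        (hodge n d (i - (j : ℤ) * d) : ℤ)
          = ((((cubeS n d).filter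
              fun u => (d : ℤ) ∣ i - ∑ k, u k ∧ ∑ k, u k ≤ i).filter
                fun u => ((i - ∑ k, u k) / d).toNat = j).card : ℤ) := by
      intro j hj
      rw [Finset.mem_range] at hj
      congr 1
      rw [hodge, Finset.filter_filter]
      show _ = ((cubeS n d).filter _).card
      apply congrArg
      apply Finset.filter_congr
      intro u _
      constructor
      · intro heq
        have h1 : i - ∑ k, u k = (j : ℤ) * d := by linarith
        have hj0 : (0 : ℤ) ≤ (j : ℤ) := Int.natCast_nonneg j
        refine ⟨⟨⟨j, by linarith [h1]⟩, ?_⟩, ?_⟩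
        · nlinarith
        · rw [h1, Int.mul_ediv_cancel _ (ne_of_gt hd0)]
          simp
      · rintro ⟨⟨⟨c, hc⟩, hle⟩, htn⟩
        have hc0 : 0 ≤ c := by nlinarith
        have h2 : ((d : ℤ) * c) / d = c := Int.mul_ediv_cancel_left _ (ne_of_gt hd0)
        simp only [hc, h2] at htn
        have hcj : (c.toNat : ℤ) = c := Int.toNat_of_nonneg hc0
        have : c = (j : ℤ) := by rw [← htn, hcj]
        rw [this] at hc
        linarith
    rw [key, Finset.sum_congr rfl main]
    push_cast
    rfl

/-- The mod-`d` class count. -/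
private noncomputable def Tcard (n d : ℕ) (i : ℤ) : ℕ :=
  ((cubeS n d).filter fun u => (d : ℤ) ∣ i - ∑ k, u k).card

private lemma Tcard_congr (n d : ℕ) {i i' : ℤ} (h : (d : ℤ) ∣ i - i') :
    Tcard n d i = Tcard n d i' := by
  unfold Tcard
  apply congrArg
  apply Finset.filter_congr
  intro u _
  constructor
  · intro hdvd
    have h2 := dvd_sub hdvd h
    have h3 : i - ∑ k, u k - (i - i') = i' - ∑ k, u k := by ring
    rwa [h3] at h2
  · intro hdvd
    have h2 := dvd_add hdvd h
    have h3 : i' - ∑ k, u k + (i - i') = i - ∑ k, u k := by ring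
    rwa [h3] at h2

/-- Key reflection identity: `H_i + H_{nd-d-i} = T_i`. -/
private lemma Hsum_add_Hsum (n d : ℕ) (hn : 1 ≤ n) (hd : 1 ≤ d) (i : ℤ) :
    Hsum n d i + Hsum n d ((n : ℤ) * d - d - i) = (Tcard n d i : ℤ) := by
  have hd0 : (0 : ℤ) < d := by exact_mod_cast hd
  rw [Hsum_eq_card n d hn hd, Hsum_eq_card n d hn hd, ← Nat.cast_add]
  congr 1
  unfold Tcard
  rw [← Finset.card_filter_add_card_filter_not
    (s := (cubeS n d).filter fun u => (d : ℤ) ∣ i - ∑ k, u k)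
    (fun u => ∑ k, u k ≤ i)]
  congr 1
  · rw [Finset.filter_filter]
  · rw [Finset.filter_filter]
    apply Finset.card_bij' (i := fun u _ => fun k => (d : ℤ) - u k)
      (j := fun u _ => fun k => (d : ℤ) - u k)
    · intro u hu
      simp only [Finset.mem_filter] at hu ⊢
      obtain ⟨hu, hdvd, hle⟩ := hu
      have hmem : (fun k => (d : ℤ) - u k) ∈ cubeS n d := by
        rw [cubeS, Fintype.mem_piFinset]
        intro k
        have hk := mem_cubeS hu k
        rw [Finset.mem_Icc]
        constructor <;> linarith [hk.1, hk.2]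
      have hsum : ∑ k, ((d : ℤ) - u k) = (n : ℤ) * d - ∑ k, u k := by
        rw [Finset.sum_sub_distrib]
        simp [mul_comm]
      refine ⟨hmem, ?_, ?_⟩
      · rw [hsum]
        obtain ⟨c, hc⟩ := hdvd
        exact ⟨-1 - c, by linear_combination -hc⟩
      · rw [hsum]
        intro hcon
        linarith
    · intro u hu
      simp only [Finset.mem_filter] at hu ⊢
      obtain ⟨hu, hdvd, hnle⟩ := hu
      have hlt : i < ∑ k, u k := lt_of_not_ge hnle
      have hmem : (fun k => (d : ℤ) - u k) ∈ cubeS n d := by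
        rw [cubeS, Fintype.mem_piFinset]
        intro k
        have hk := mem_cubeS hu k
        rw [Finset.mem_Icc]
        constructor <;> linarith [hk.1, hk.2]
      have hsum : ∑ k, ((d : ℤ) - u k) = (n : ℤ) * d - ∑ k, u k := by
        rw [Finset.sum_sub_distrib]
        simp [mul_comm]
      refine ⟨hmem, ?_, ?_⟩
      · rw [hsum]
        obtain ⟨c, hc⟩ := hdvd
        exact ⟨-1 - c, by linear_combination -hc⟩
      · rw [hsum]
        have hdvd2 : (d : ℤ) ∣ ∑ k, u k - i := by
          obtain ⟨c, hc⟩ := hdvd; exact ⟨-c, by linarith⟩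
        have := Int.le_of_dvd (by linarith) hdvd2
        linarith
    · intro u _; funext k; ring
    · intro u _; funext k; ring

/-- Inverse step: multiplying by `c` undoes multiplying by `e` on the cube. -/
private lemma inv_step (d : ℕ) (hd0 : (0 : ℤ) < d) {e c x : ℤ} (hec : (d : ℤ) ∣ e * c - 1)
    (hx1 : 1 ≤ x) (hx2 : x ≤ (d : ℤ) - 1) :
    (c * ((e * x - 1) % d + 1) - 1) % d + 1 = x := by
  have hm : (d : ℤ) ∣ ((e * x - 1) % d + 1) - e * x := hmod_aux d (e * x)
  have hdvd : (d : ℤ) ∣ (x - 1) - (c * ((e * x - 1) % d + 1) - 1) := by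
    obtain ⟨q1, hq1⟩ := hm
    obtain ⟨q2, hq2⟩ := hec
    exact ⟨-c * q1 - x * q2, by linear_combination (-c) * hq1 + (-x) * hq2⟩
  have hcong : (c * ((e * x - 1) % d + 1) - 1) % d = (x - 1) % d :=
    Int.modEq_iff_dvd.mpr hdvd
  rw [hcong, Int.emod_eq_of_lt (by linarith) (by linarith)]
  ring

/-- `T` is invariant under multiplying the index by a unit mod `d`. -/
private lemma Tcard_mul (n d : ℕ) (hd : 1 ≤ d) (e c : ℤ) (hec : (d : ℤ) ∣ e * c - 1) (i : ℤ) :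
    Tcard n d i = Tcard n d (e * i) := by
  have hd0 : (0 : ℤ) < d := by exact_mod_cast hd
  have hce : (d : ℤ) ∣ c * e - 1 := by rw [mul_comm]; exact hec
  have cancel : ∀ (e' c' : ℤ), (d : ℤ) ∣ e' * c' - 1 → ∀ x : ℤ, (d : ℤ) ∣ e' * x →
      (d : ℤ) ∣ x := by
    intro e' c' h x hx
    have hre : x = c' * (e' * x) - (e' * c' - 1) * x := by ring
    rw [hre]
    exact dvd_sub (Dvd.dvd.mul_left hx c') (Dvd.dvd.mul_right h x)
  have hmap : ∀ (e' c' : ℤ), (d : ℤ) ∣ e' * c' - 1 → ∀ {u : Fin n → ℤ}, u ∈ cubeS n d →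
      (fun k => (e' * u k - 1) % d + 1) ∈ cubeS n d := by
    intro e' c' h u hu
    rw [cubeS, Fintype.mem_piFinset]
    intro k
    have hk := mem_cubeS hu k
    have h1 : 0 ≤ (e' * u k - 1) % d := Int.emod_nonneg _ (ne_of_gt hd0)
    have h2 : (e' * u k - 1) % d < d := Int.emod_lt_of_pos _ hd0
    rw [Finset.mem_Icc]
    refine ⟨by linarith, ?_⟩
    by_contra hcon
    push_neg at hcon
    have heq : (e' * u k - 1) % d + 1 = d := by linarith
    have hdvd : (d : ℤ) ∣ e' * u k := by
      have hm := hmod_aux d (e' * u k)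
      rw [heq] at hm
      obtain ⟨q, hq⟩ := hm
      exact ⟨1 - q, by linarith⟩
    have h3 := cancel e' c' h (u k) hdvd
    have h4 := Int.le_of_dvd (by linarith [hk.1]) h3
    linarith [hk.2]
  have hsum : ∀ (e' : ℤ) (u : Fin n → ℤ),
      (d : ℤ) ∣ ∑ k, ((e' * u k - 1) % d + 1) - e' * ∑ k, u k := by
    intro e' u
    have hre : ∑ k, ((e' * u k - 1) % d + 1) - e' * ∑ k, u k
        = ∑ k, (((e' * u k - 1) % d + 1) - e' * u k) := by
      rw [Finset.sum_sub_distrib, Finset.mul_sum]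
    rw [hre]
    exact Finset.dvd_sum fun k _ => hmod_aux d (e' * u k)
  unfold Tcard
  apply Finset.card_bij' (i := fun u _ => fun k => (e * u k - 1) % d + 1)
    (j := fun u _ => fun k => (c * u k - 1) % d + 1)
  · intro u hu
    simp only [Finset.mem_filter] at hu ⊢
    obtain ⟨hu, hdvd⟩ := hu
    refine ⟨hmap e c hec hu, ?_⟩
    obtain ⟨q1, hq1⟩ := hsum e u
    obtain ⟨q2, hq2⟩ := hdvd
    exact ⟨e * q2 - q1, by linear_combination (-1 : ℤ) * hq1 + e * hq2⟩
  · intro u hu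
    simp only [Finset.mem_filter] at hu ⊢
    obtain ⟨hu, hdvd⟩ := hu
    refine ⟨hmap c e hce hu, ?_⟩
    obtain ⟨q1, hq1⟩ := hsum c u
    obtain ⟨q2, hq2⟩ := hdvd
    obtain ⟨q3, hq3⟩ := hec
    exact ⟨-q3 * i + c * q2 - q1, by linear_combination (-1 : ℤ) * hq1 + c * hq2 + (-i) * hq3⟩
  · intro u hu
    simp only [Finset.mem_filter] at hu
    funext k
    have hk := mem_cubeS hu.1 k
    exact inv_step d hd0 hec hk.1 hk.2
  · intro u hu
    simp only [Finset.mem_filter] at hu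
    funext k
    have hk := mem_cubeS hu.1 k
    exact inv_step d hd0 hce hk.1 hk.2

/-- Symmetry of Frobenius numbers: if `(p−1)·j ≢ 0 (mod d)`, then
`h_{nd−j,1} = h_{j,0}` and `h_{nd−j,0} = h_{j,1}`.  Here `s` plays the role of
`σ_j(0)` (the unique element of `{1,…,d}` with `p·s ≡ (p−1)·j (mod d)`) and
`s'` plays the role of `σ_{nd−j}(0)`. -/
theorem frobenius_numbers_symm (n d p : ℕ) (hn : 1 ≤ n) (hd : 2 ≤ d)
    (hp : p.Prime) (hpd : Nat.gcd p d = 1) (j : ℤ)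
    (hj0 : 0 ≤ j) (hj1 : j ≤ (n : ℤ) * d)
    (hndvd : ¬ (d : ℤ) ∣ ((p : ℤ) - 1) * j)
    (s : ℤ) (hs1 : 1 ≤ s) (hs2 : s ≤ d)
    (hs : (d : ℤ) ∣ (p : ℤ) * s - ((p : ℤ) - 1) * j)
    (s' : ℤ) (hs'1 : 1 ≤ s') (hs'2 : s' ≤ d)
    (hs' : (d : ℤ) ∣ (p : ℤ) * s' - ((p : ℤ) - 1) * ((n : ℤ) * d - j)) :
    Hsum n d ((n : ℤ) * d - j - s') - Hsum n d ((n : ℤ) * d - j - d)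
        = Hsum n d j - Hsum n d (j - s) ∧
      Hsum n d ((n : ℤ) * d - j) - Hsum n d ((n : ℤ) * d - j - s')
        = Hsum n d (j - s) - Hsum n d (j - d) := by
  have hd1 : 1 ≤ d := by omega
  have hd0 : (0 : ℤ) < d := by exact_mod_cast hd1
  -- coprimality: get a with p * a ≡ 1 mod d
  have hcop : IsCoprime ((p : ℤ)) ((d : ℤ)) := by
    rw [Int.isCoprime_iff_gcd_eq_one]
    exact_mod_cast hpd
  obtain ⟨a, b, hab⟩ := hcop
  have hpa : (d : ℤ) ∣ (p : ℤ) * a - 1 := ⟨-b, by linarith [hab]⟩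
  -- d ∣ s + s'
  have hss' : (d : ℤ) ∣ s + s' := by
    have h1 : (d : ℤ) ∣ (p : ℤ) * (s + s') := by
      have h2 : (p : ℤ) * (s + s') = ((p : ℤ) * s - ((p : ℤ) - 1) * j)
          + ((p : ℤ) * s' - ((p : ℤ) - 1) * ((n : ℤ) * d - j))
          + (d : ℤ) * (((p : ℤ) - 1) * n) := by ring
      rw [h2]
      exact dvd_add (dvd_add hs hs') (Dvd.intro _ rfl)
    -- cancel p
    have hre : s + s' = a * ((p : ℤ) * (s + s')) - ((p : ℤ) * a - 1) * (s + s') := by ring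
    rw [hre]
    exact dvd_sub (Dvd.dvd.mul_left h1 a) (Dvd.dvd.mul_right hpa _)
  -- s + s' = d
  have hsd : s + s' = d := by
    obtain ⟨c, hc⟩ := hss'
    have hc1 : 1 ≤ c := by nlinarith
    have hc2 : c ≤ 2 := by nlinarith
    interval_cases c
    · linarith
    · exfalso
      have hsd2 : s = d := by linarith
      apply hndvd
      obtain ⟨q, hq⟩ := hs
      exact ⟨(p : ℤ) - q, by linear_combination -hq + (p : ℤ) * hsd2⟩
  -- T(j-s) = T(j)
  have hT1 : Tcard n d (j - s) = Tcard n d j := by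
    rw [Tcard_mul n d hd1 (p : ℤ) a hpa (j - s)]
    apply Tcard_congr
    have h4 : (p : ℤ) * (j - s) - j = -((p : ℤ) * s - ((p : ℤ) - 1) * j) := by ring
    rw [h4]
    exact dvd_neg.mpr hs
  -- T(j-d) = T(j)
  have hT2 : Tcard n d (j - d) = Tcard n d j :=
    Tcard_congr n d ⟨-1, by ring⟩
  have E1 := Hsum_add_Hsum n d hn hd1 (j - s)
  have E2 := Hsum_add_Hsum n d hn hd1 j
  have E3 := Hsum_add_Hsum n d hn hd1 (j - d)
  have ha1 : (n : ℤ) * d - j - s' = (n : ℤ) * d - d - (j - s) := by linarith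
  have ha2 : (n : ℤ) * d - j = (n : ℤ) * d - d - (j - d) := by ring
  have ha3 : (n : ℤ) * d - j - d = (n : ℤ) * d - d - j := by ring
  have g1 := congrArg (Hsum n d) ha1
  have g2 := congrArg (Hsum n d) ha2
  have g3 := congrArg (Hsum n d) ha3
  rw [hT1] at E1
  rw [hT2] at E3
  constructor <;> linarith [E1, E2, E3, g1, g2, g3]
end

section
/- Let n ≥ 1, d ≥ 2 be integers and p a prime with gcd(p,d) = 1. For every integer i with 0 ≤ i ≤ nd, the following identity holds: Σ_{j=0}^{i} h_{j,1} = Σ_{j=0}^{i} ( ⌈(p−1)j/d⌉ + ⌈(j−i)/d⌉ − ⌈(pj−i)/d⌉ ) · h_j, where ⌈·⌉ denotes the ceiling of a rational number. -/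
lemma my_ceil_div (a : ℤ) (d : ℕ) : ⌈((a:ℚ))/(d:ℚ)⌉ = -((-a) / (d:ℤ)) := by
  rw [← Rat.floor_intCast_div_natCast (-a) d, ← Int.ceil_neg]
  push_cast; ring_nf

lemma my_ediv_succ (d b : ℤ) (hd : 0 < d) :
    (b + 1) / d = b / d + (if d ∣ b + 1 then 1 else 0) := by
  by_cases h : d ∣ b + 1
  · obtain ⟨k, hk⟩ := h
    have hb : b = (d - 1) + (k - 1) * d := by linarith
    have h1 : b / d = (d-1)/d + (k-1) := by
      rw [hb]; exact Int.add_mul_ediv_right _ _ (by omega)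
    have h2 : (d-1)/d = 0 := Int.ediv_eq_zero_of_lt (by omega) (by omega)
    have h3 : (b+1)/d = k := by
      rw [show b + 1 = d * k from hk]; exact Int.mul_ediv_cancel_left _ (by omega)
    rw [if_pos ⟨k, hk⟩]
    linarith
  · have hq := Int.mul_ediv_add_emod b d
    have hr0 : 0 ≤ b % d := Int.emod_nonneg b (by omega)
    have hr1 : b % d < d := Int.emod_lt_of_pos b hd
    have hrne : b % d ≠ d - 1 := by
      intro hr
      refine h ⟨b / d + 1, by rw [mul_add, mul_one]; linarith⟩
    have h4 : b + 1 = (b % d + 1) + (b / d) * d := by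
      have hc : d * (b / d) = (b / d) * d := mul_comm _ _
      linarith
    have h5 : (b+1)/d = (b % d + 1)/d + b/d := by
      rw [h4]; exact Int.add_mul_ediv_right _ _ (by omega)
    have h6 : (b % d + 1)/d = 0 := Int.ediv_eq_zero_of_lt (by omega) (by omega)
    rw [if_neg h, h5, h6]
    ring

lemma my_ceil_pred (d : ℕ) (hd : 0 < d) (a : ℤ) :
    ⌈((a:ℚ) - 1)/(d:ℚ)⌉ = ⌈(a:ℚ)/(d:ℚ)⌉ - (if (d:ℤ) ∣ a - 1 then 1 else 0) := by
  have e : ((a:ℚ) - 1) = (((a - 1 : ℤ)):ℚ) := by push_cast; ring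
  rw [e, my_ceil_div, my_ceil_div]
  have hdd : (0:ℤ) < (d:ℤ) := by exact_mod_cast hd
  have h1 : (-(a-1)) = (-a) + 1 := by ring
  rw [h1, my_ediv_succ _ _ hdd]
  have h2 : ((d:ℤ) ∣ -a + 1) ↔ ((d:ℤ) ∣ a - 1) := by
    constructor
    · intro ⟨k, hk⟩; exact ⟨-k, by linarith⟩
    · intro ⟨k, hk⟩; exact ⟨-k, by linarith⟩
  simp only [h2]
  split <;> ring

lemma Hsum_eq_filter (n d : ℕ) (hd : 0 < d) (m : ℤ) (N : ℕ) (h1 : m < (N:ℤ))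
    (h2 : (N:ℤ) ≤ m + d) :
    Hsum n d m = ∑ j ∈ Finset.range N, if (d:ℤ) ∣ (j:ℤ) - m then (hodge n d j : ℤ) else 0 := by
  have hdd : (0:ℤ) < (d:ℤ) := by exact_mod_cast hd
  rcases lt_or_ge m 0 with hm | hm
  · rw [Hsum, if_pos hm]
    symm; apply Finset.sum_eq_zero
    intro j hj
    rw [if_neg]
    intro hdvd
    have hj' : (j:ℤ) < N := by exact_mod_cast Finset.mem_range.mp hj
    have hpos : 0 < (j:ℤ) - m := by have : (0:ℤ) ≤ j := Int.natCast_nonneg j; omega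
    have := Int.le_of_dvd hpos hdvd
    omega
  · rw [Hsum, if_neg (not_lt.mpr hm), ← Finset.sum_filter]
    have hK : ((m / d).toNat : ℤ) = m / d := Int.toNat_of_nonneg (Int.ediv_nonneg hm (by omega))
    refine Finset.sum_nbij' (fun t => (m - (t:ℤ)*d).toNat)
      (fun j => ((m - (j:ℤ))/d).toNat) ?_ ?_ ?_ ?_ ?_
    · intro t ht
      have ht' : (t:ℤ) ≤ m / d := by
        have := Finset.mem_range.mp ht; omega
      have htd : (t:ℤ)*d ≤ m := by
        rwa [← Int.le_ediv_iff_mul_le hdd]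
      have h0 : (0:ℤ) ≤ (t:ℤ)*(d:ℤ) := by positivity
      have hnn : 0 ≤ m - (t:ℤ)*d := by omega
      beta_reduce
      rw [Finset.mem_filter, Finset.mem_range]
      constructor
      · have : ((m - (t:ℤ)*d).toNat : ℤ) < N := by rw [Int.toNat_of_nonneg hnn]; omega
        exact_mod_cast this
      · rw [Int.toNat_of_nonneg hnn]
        exact ⟨-t, by ring⟩
    · intro j hj
      beta_reduce
      rw [Finset.mem_filter, Finset.mem_range] at hj
      obtain ⟨hjN, hjd⟩ := hj
      have hjN' : (j:ℤ) < N := by exact_mod_cast hjN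
      have hjm : (j:ℤ) ≤ m := by
        by_contra hc
        push_neg at hc
        have := Int.le_of_dvd (by omega) hjd
        omega
      have hnn : 0 ≤ m - (j:ℤ) := by omega
      rw [Finset.mem_range]
      have hle : (m - (j:ℤ))/d ≤ m / d :=
        Int.ediv_le_ediv hdd (by have : (0:ℤ) ≤ j := Int.natCast_nonneg j; omega)
      have h5 : (((m - (j:ℤ))/d).toNat : ℤ) ≤ m / d := by
        rw [Int.toNat_of_nonneg (Int.ediv_nonneg hnn (by omega))]; exact hle
      omega
    · intro t ht
      have ht' : (t:ℤ) ≤ m / d := by have := Finset.mem_range.mp ht; omega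
      have htd : (t:ℤ)*d ≤ m := by rwa [← Int.le_ediv_iff_mul_le hdd]
      have h0 : (0:ℤ) ≤ (t:ℤ)*(d:ℤ) := by positivity
      have hnn : 0 ≤ m - (t:ℤ)*d := by omega
      beta_reduce
      rw [Int.toNat_of_nonneg hnn]
      have he : (m - (m - (t:ℤ)*d))/d = t := by
        rw [show m - (m - (t:ℤ)*d) = (t:ℤ)*d by ring]
        exact Int.mul_ediv_cancel _ (by omega)
      rw [he]
      exact Int.toNat_natCast t
    · intro j hj
      beta_reduce
      rw [Finset.mem_filter, Finset.mem_range] at hj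
      obtain ⟨hjN, hjd⟩ := hj
      have hjN' : (j:ℤ) < N := by exact_mod_cast hjN
      have hjm : (j:ℤ) ≤ m := by
        by_contra hc
        push_neg at hc
        have := Int.le_of_dvd (by omega) hjd
        omega
      have hdvd' : (d:ℤ) ∣ m - j := (dvd_sub_comm).mp hjd
      have hnn : 0 ≤ m - (j:ℤ) := by omega
      rw [Int.toNat_of_nonneg (Int.ediv_nonneg hnn (by omega))]
      rw [Int.ediv_mul_cancel hdvd']
      rw [show m - (m - (j:ℤ)) = (j:ℤ) by ring]
      exact Int.toNat_natCast j
    · intro t ht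
      have ht' : (t:ℤ) ≤ m / d := by have := Finset.mem_range.mp ht; omega
      have htd : (t:ℤ)*d ≤ m := by rwa [← Int.le_ediv_iff_mul_le hdd]
      have h0 : (0:ℤ) ≤ (t:ℤ)*(d:ℤ) := by positivity
      have hnn : 0 ≤ m - (t:ℤ)*d := by omega
      beta_reduce
      rw [Int.toNat_of_nonneg hnn]

/-- For `0 ≤ i ≤ nd`,
`Σ_{j=0}^{i} h_{j,1} = Σ_{j=0}^{i} (⌈(p−1)j/d⌉ + ⌈(j−i)/d⌉ − ⌈(pj−i)/d⌉)·h_j`,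
where `h_{j,1} = H_{j−σ_j(0)} − H_{j−d}`, and `σ : ℕ → ℤ` assigns to each `j`
the unique `σ j ∈ {1,…,d}` with `p·σ j ≡ (p−1)·j (mod d)`. -/
theorem frobenius_half_sum (n d p : ℕ) (hn : 1 ≤ n) (hd : 2 ≤ d)
    (hp : p.Prime) (hpd : Nat.gcd p d = 1)
    (σ : ℕ → ℤ)
    (hσ : ∀ j : ℕ, (j : ℤ) ≤ (n : ℤ) * d →
      1 ≤ σ j ∧ σ j ≤ d ∧ (d : ℤ) ∣ (p : ℤ) * σ j - ((p : ℤ) - 1) * (j : ℤ))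
    (i : ℕ) (hi : (i : ℤ) ≤ (n : ℤ) * d) :
    ∑ j ∈ Finset.range (i + 1), (Hsum n d ((j : ℤ) - σ j) - Hsum n d ((j : ℤ) - d))
      = ∑ j ∈ Finset.range (i + 1),
          (⌈(((p : ℚ) - 1) * (j : ℚ)) / (d : ℚ)⌉
            + ⌈((j : ℚ) - (i : ℚ)) / (d : ℚ)⌉
            - ⌈((p : ℚ) * (j : ℚ) - (i : ℚ)) / (d : ℚ)⌉) * (hodge n d j : ℤ) := by
  have hd0 : 0 < d := by omega
  have hdd : (0:ℤ) < (d:ℤ) := by exact_mod_cast hd0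
  have hcop : IsCoprime ((d:ℤ)) ((p:ℤ)) := by
    rw [Int.isCoprime_iff_gcd_eq_one, Int.gcd_natCast_natCast, Nat.gcd_comm]
    exact hpd
  induction i with
  | zero =>
    have hσ0 := hσ 0 (by positivity)
    rw [Finset.sum_range_one, Finset.sum_range_one]
    rw [Hsum, if_pos (by omega), Hsum, if_pos (by omega)]
    norm_num
  | succ i ih =>
    have hi' : (i : ℤ) ≤ (n:ℤ) * d := by push_cast at hi ⊢; omega
    have IH := ih hi'
    obtain ⟨hs1, hs2, hs3⟩ := hσ (i+1) hi
    -- pointwise change of coefficient when passing from i to i+1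
    have key : ∀ j ∈ Finset.range (i+1),
        (⌈(((p : ℚ) - 1) * (j : ℚ)) / (d : ℚ)⌉
            + ⌈((j : ℚ) - ((i+1:ℕ) : ℚ)) / (d : ℚ)⌉
            - ⌈((p : ℚ) * (j : ℚ) - ((i+1:ℕ) : ℚ)) / (d : ℚ)⌉) * (hodge n d j : ℤ)
        = (⌈(((p : ℚ) - 1) * (j : ℚ)) / (d : ℚ)⌉
            + ⌈((j : ℚ) - (i : ℚ)) / (d : ℚ)⌉
            - ⌈((p : ℚ) * (j : ℚ) - (i : ℚ)) / (d : ℚ)⌉) * (hodge n d j : ℤ)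
          + ((if (d:ℤ) ∣ (p:ℤ)*(j:ℤ) - ((i:ℤ)+1) then 1 else 0)
             - (if (d:ℤ) ∣ (j:ℤ) - ((i:ℤ)+1) then 1 else 0)) * (hodge n d j : ℤ) := by
      intro j hj
      have e1 : ((j : ℚ) - ((i+1:ℕ) : ℚ)) = ((((j:ℤ) - (i:ℤ) : ℤ)):ℚ) - 1 := by push_cast; ring
      have e2 : ((p : ℚ) * (j : ℚ) - ((i+1:ℕ) : ℚ)) = ((((p:ℤ)*(j:ℤ) - (i:ℤ) : ℤ)):ℚ) - 1 := by
        push_cast; ring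
      have e3 : ((j : ℚ) - (i : ℚ)) = ((((j:ℤ) - (i:ℤ) : ℤ)):ℚ) := by push_cast; ring
      have e4 : ((p : ℚ) * (j : ℚ) - (i : ℚ)) = ((((p:ℤ)*(j:ℤ) - (i:ℤ) : ℤ)):ℚ) := by
        push_cast; ring
      rw [e1, e2, e3, e4, my_ceil_pred d hd0, my_ceil_pred d hd0]
      have d1 : ((j:ℤ) - (i:ℤ) - 1) = (j:ℤ) - ((i:ℤ)+1) := by ring
      have d2 : ((p:ℤ)*(j:ℤ) - (i:ℤ) - 1) = (p:ℤ)*(j:ℤ) - ((i:ℤ)+1) := by ring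
      rw [d1, d2]
      ring
    -- the indicator sum equals the new Hsum difference
    have hsub : ∑ j ∈ Finset.range (i+1),
        ((if (d:ℤ) ∣ (p:ℤ)*(j:ℤ) - ((i:ℤ)+1) then 1 else 0)
             - (if (d:ℤ) ∣ (j:ℤ) - ((i:ℤ)+1) then 1 else 0)) * (hodge n d j : ℤ)
        = Hsum n d (((i:ℤ)+1) - σ (i+1)) - Hsum n d (((i:ℤ)+1) - d) := by
      have split : ∀ j ∈ Finset.range (i+1),
          ((if (d:ℤ) ∣ (p:ℤ)*(j:ℤ) - ((i:ℤ)+1) then 1 else 0)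
             - (if (d:ℤ) ∣ (j:ℤ) - ((i:ℤ)+1) then 1 else 0)) * (hodge n d j : ℤ)
          = (if (d:ℤ) ∣ (j:ℤ) - (((i:ℤ)+1) - σ (i+1)) then (hodge n d j : ℤ) else 0)
            - (if (d:ℤ) ∣ (j:ℤ) - (((i:ℤ)+1) - d) then (hodge n d j : ℤ) else 0) := by
        intro j hj
        have hiff1 : ((d:ℤ) ∣ (p:ℤ)*(j:ℤ) - ((i:ℤ)+1)) ↔
            ((d:ℤ) ∣ (j:ℤ) - (((i:ℤ)+1) - σ (i+1))) := by
          constructor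
          · intro h
            have hp1 : (d:ℤ) ∣ (p:ℤ) * ((j:ℤ) - (((i:ℤ)+1) - σ (i+1))) := by
              have he : (p:ℤ) * ((j:ℤ) - (((i:ℤ)+1) - σ (i+1)))
                  = ((p:ℤ)*(j:ℤ) - ((i:ℤ)+1)) + ((p:ℤ) * σ (i+1) - ((p:ℤ)-1) * ((i+1:ℕ):ℤ)) := by
                push_cast; ring
              rw [he]
              exact dvd_add h hs3
            exact hcop.dvd_of_dvd_mul_left hp1
          · intro h
            have he : ((p:ℤ)*(j:ℤ) - ((i:ℤ)+1))
                = (p:ℤ) * ((j:ℤ) - (((i:ℤ)+1) - σ (i+1)))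
                  - ((p:ℤ) * σ (i+1) - ((p:ℤ)-1) * ((i+1:ℕ):ℤ)) := by
              push_cast; ring
            rw [he]
            exact dvd_sub (Dvd.dvd.mul_left h _) hs3
        have hiff2 : ((d:ℤ) ∣ (j:ℤ) - ((i:ℤ)+1)) ↔
            ((d:ℤ) ∣ (j:ℤ) - (((i:ℤ)+1) - d)) := by
          constructor
          · intro h
            have he : (j:ℤ) - (((i:ℤ)+1) - d) = ((j:ℤ) - ((i:ℤ)+1)) + d := by ring
            rw [he]; exact dvd_add h dvd_rfl
          · intro h
            have he : (j:ℤ) - ((i:ℤ)+1) = ((j:ℤ) - (((i:ℤ)+1) - d)) - d := by ring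
            rw [he]; exact dvd_sub h dvd_rfl
        simp only [hiff1, hiff2]
        split <;> split <;> ring
      rw [Finset.sum_congr rfl split, Finset.sum_sub_distrib]
      rw [← Hsum_eq_filter n d hd0 (((i:ℤ)+1) - σ (i+1)) (i+1) (by push_cast; omega)
        (by push_cast; omega)]
      rw [← Hsum_eq_filter n d hd0 (((i:ℤ)+1) - d) (i+1) (by push_cast; omega)
        (by push_cast; omega)]
    -- the new last coefficient vanishes
    have hlast : (⌈(((p : ℚ) - 1) * ((i+1 : ℕ) : ℚ)) / (d : ℚ)⌉
            + ⌈(((i+1:ℕ) : ℚ) - ((i+1:ℕ) : ℚ)) / (d : ℚ)⌉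
            - ⌈((p : ℚ) * ((i+1:ℕ) : ℚ) - ((i+1:ℕ) : ℚ)) / (d : ℚ)⌉) = 0 := by
      have e1 : ((p : ℚ) * ((i+1:ℕ) : ℚ) - ((i+1:ℕ) : ℚ)) = ((p : ℚ) - 1) * ((i+1:ℕ):ℚ) := by
        ring
      rw [e1, sub_self, zero_div, Int.ceil_zero]
      ring
    -- assemble the right-hand side
    have hRtot : ∑ j ∈ Finset.range (i + 1 + 1),
          (⌈(((p : ℚ) - 1) * (j : ℚ)) / (d : ℚ)⌉
            + ⌈((j : ℚ) - ((i+1:ℕ) : ℚ)) / (d : ℚ)⌉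
            - ⌈((p : ℚ) * (j : ℚ) - ((i+1:ℕ) : ℚ)) / (d : ℚ)⌉) * (hodge n d j : ℤ)
        = (∑ j ∈ Finset.range (i + 1),
          (⌈(((p : ℚ) - 1) * (j : ℚ)) / (d : ℚ)⌉
            + ⌈((j : ℚ) - (i : ℚ)) / (d : ℚ)⌉
            - ⌈((p : ℚ) * (j : ℚ) - (i : ℚ)) / (d : ℚ)⌉) * (hodge n d j : ℤ))
          + (Hsum n d (((i:ℤ)+1) - σ (i+1)) - Hsum n d (((i:ℤ)+1) - d)) := by
      rw [Finset.sum_range_succ, hlast, zero_mul, add_zero]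
      rw [Finset.sum_congr rfl key, Finset.sum_add_distrib, hsub]
    rw [hRtot, Finset.sum_range_succ, IH]
    have ecast : ((i+1:ℕ):ℤ) = (i:ℤ)+1 := by push_cast; ring
    rw [ecast]
end

section
/- Let n ≥ 1 and d ≥ 1 be integers and let W := {w ∈ ℕ^n : w_1 + ⋯ + w_n ≤ d}. For every u ∈ ℕ^n, the minimum of Σ_{w∈W} s(w) over all functions s : W → ℕ satisfying Σ_{w∈W} s(w)·w = u equals ⌈(u_1 + ⋯ + u_n)/d⌉; in particular such functions s exist. -/
/-- The set of lattice points of the simplex `Simp(n,d)`: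
`W = {w ∈ ℕ^n : w_1 + ⋯ + w_n ≤ d}`. -/
def simplexPts (n d : ℕ) : Finset (Fin n → ℕ) :=
  (Fintype.piFinset fun _ : Fin n => Finset.range (d + 1)).filter fun w => ∑ i, w i ≤ d

lemma mem_simplexPts {n d : ℕ} {w : Fin n → ℕ} (h : ∑ i, w i ≤ d) :
    w ∈ simplexPts n d := by
  simp only [simplexPts, Finset.mem_filter, Fintype.mem_piFinset, Finset.mem_range]
  refine ⟨fun i => ?_, h⟩
  have : w i ≤ ∑ j, w j := Finset.single_le_sum (f := w) (fun j _ => Nat.zero_le _)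
    (Finset.mem_univ i)
  omega

lemma exists_sub (n d : ℕ) : ∀ u : Fin n → ℕ, d ≤ ∑ i, u i →
    ∃ v : Fin n → ℕ, (∀ i, v i ≤ u i) ∧ ∑ i, v i = d := by
  induction d with
  | zero => intro u _; exact ⟨fun _ => 0, fun i => Nat.zero_le _, by simp⟩
  | succ d ih =>
    intro u hu
    obtain ⟨v, hv, hvs⟩ := ih u (le_trans (Nat.le_succ d) hu)
    have hlt : ∑ i, v i < ∑ i, u i := by omega
    have hex : ∃ i, v i < u i := by
      by_contra hc
      push_neg at hc
      exact absurd (Finset.sum_le_sum (fun i (_ : i ∈ Finset.univ) => hc i)) (by omega)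
    obtain ⟨j, hj⟩ := hex
    refine ⟨fun i => v i + if i = j then 1 else 0, fun i => ?_, ?_⟩
    · rcases eq_or_ne i j with h | h
      · subst h; simpa using hj
      · simp [h]; exact hv i
    · rw [Finset.sum_add_distrib, Finset.sum_ite_eq' Finset.univ j (fun _ => 1)]
      simp [hvs]

lemma exists_sec (n d : ℕ) (hd : 1 ≤ d) : ∀ T : ℕ, ∀ u : Fin n → ℕ, ∑ i, u i = T →
    ∃ s : (Fin n → ℕ) → ℕ,
      (∀ i, ∑ w ∈ simplexPts n d, s w * w i = u i) ∧
      (∑ w ∈ simplexPts n d, (s w : ℤ)) = ⌈(T : ℚ) / (d : ℚ)⌉ := by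
  intro T
  induction T using Nat.strong_induction_on with
  | _ T ih =>
    intro u hu
    rcases Nat.eq_zero_or_pos T with hT | hT
    · subst hT
      refine ⟨fun _ => 0, fun i => ?_, by simp⟩
      have : u i = 0 := Finset.sum_eq_zero_iff.mp hu i (Finset.mem_univ i)
      simp [this]
    rcases le_or_gt T d with hTd | hTd
    · -- u itself is in the simplex
      have hmem : u ∈ simplexPts n d := mem_simplexPts (by omega)
      refine ⟨fun w => if w = u then 1 else 0, fun i => ?_, ?_⟩
      · rw [Finset.sum_eq_single u]
        · simp
        · intro w _ hw; simp [hw]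
        · intro h; exact absurd hmem h
      · rw [Finset.sum_eq_single u]
        · have hc : ⌈(T : ℚ) / (d : ℚ)⌉ = 1 := by
            have hT' : (0 : ℚ) < T := by exact_mod_cast hT
            have hd' : (0 : ℚ) < d := by exact_mod_cast hd
            rw [Int.ceil_eq_iff]
            constructor
            · simpa using div_pos hT' hd'
            · push_cast
              rw [div_le_one hd']
              exact_mod_cast hTd
          simp [hc]
        · intro w _ hw; simp [hw]
        · intro h; exact absurd hmem h
    · -- subtract a point of total d
      obtain ⟨v, hv, hvs⟩ := exists_sub n d u (by omega)
      have hvmem : v ∈ simplexPts n d := mem_simplexPts (le_of_eq hvs)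
      set u' : Fin n → ℕ := fun i => u i - v i with hu'
      have hu's : ∑ i, u' i = T - d := by
        have h1 : ∑ i, (u' i + v i) = ∑ i, u i :=
          Finset.sum_congr rfl fun i _ => by have := hv i; simp [hu']; omega
        rw [Finset.sum_add_distrib] at h1
        omega
      obtain ⟨s', hs'1, hs'2⟩ := ih (T - d) (by omega) u' hu's
      refine ⟨fun w => s' w + if w = v then 1 else 0, fun i => ?_, ?_⟩
      · have : ∀ w ∈ simplexPts n d,
            (s' w + if w = v then 1 else 0) * w i
              = s' w * w i + (if w = v then w i else 0) := by
          intro w _; rcases eq_or_ne w v with h | h <;> simp [h] <;> ring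
        rw [Finset.sum_congr rfl this, Finset.sum_add_distrib,
          Finset.sum_ite_eq' (simplexPts n d) v (fun w => w i), if_pos hvmem, hs'1]
        have := hv i; simp [hu']; omega
      · have hcast : ∀ w ∈ simplexPts n d,
            ((s' w + if w = v then 1 else 0 : ℕ) : ℤ)
              = (s' w : ℤ) + (if w = v then (1 : ℤ) else 0) := by
          intro w _; rcases eq_or_ne w v with h | h <;> simp [h]
        rw [Finset.sum_congr rfl hcast, Finset.sum_add_distrib,
          Finset.sum_ite_eq' (simplexPts n d) v (fun _ => (1 : ℤ)), if_pos hvmem, hs'2]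
        have hq : ((T - d : ℕ) : ℚ) = (T : ℚ) - d := by
          rw [Nat.cast_sub (by omega)]
        rw [hq]
        have hd0 : (d : ℚ) ≠ 0 := by positivity
        have : (T : ℚ) / d = ((T : ℚ) - d) / d + 1 := by
          field_simp
          ring
        rw [this, Int.ceil_add_one]

/-- For every `u ∈ ℕ^n`, the minimum of `Σ_{w∈W} s(w)` over all `s : W → ℕ` with
`Σ_{w∈W} s(w)·w = u` equals `⌈(u_1 + ⋯ + u_n)/d⌉`; in particular such `s` exist. -/
theorem min_degree_of_sections (n d : ℕ) (hn : 1 ≤ n) (hd : 1 ≤ d)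
    (u : Fin n → ℕ) :
    IsLeast {m : ℤ | ∃ s : (Fin n → ℕ) → ℕ,
        (∀ i, ∑ w ∈ simplexPts n d, s w * w i = u i) ∧
        m = ∑ w ∈ simplexPts n d, (s w : ℤ)}
      ⌈(∑ i, (u i : ℚ)) / (d : ℚ)⌉ := by
  constructor
  · obtain ⟨s, hs1, hs2⟩ := exists_sec n d hd (∑ i, u i) u rfl
    refine ⟨s, hs1, ?_⟩
    rw [hs2]
    norm_num [Nat.cast_sum]
  · rintro m ⟨s, hs1, rfl⟩
    have key : ∑ i, u i ≤ (∑ w ∈ simplexPts n d, s w) * d := by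
      calc ∑ i, u i = ∑ i, ∑ w ∈ simplexPts n d, s w * w i :=
            Finset.sum_congr rfl fun i _ => (hs1 i).symm
        _ = ∑ w ∈ simplexPts n d, ∑ i, s w * w i := Finset.sum_comm
        _ = ∑ w ∈ simplexPts n d, s w * ∑ i, w i :=
            Finset.sum_congr rfl fun w _ => (Finset.mul_sum _ _ _).symm
        _ ≤ ∑ w ∈ simplexPts n d, s w * d := by
            refine Finset.sum_le_sum fun w hw => ?_
            have : ∑ i, w i ≤ d := (Finset.mem_filter.mp hw).2
            exact Nat.mul_le_mul_left _ this
        _ = (∑ w ∈ simplexPts n d, s w) * d := by rw [Finset.sum_mul]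
    rw [show (∑ w ∈ simplexPts n d, (s w : ℤ)) = ((∑ w ∈ simplexPts n d, s w : ℕ) : ℤ) by
      push_cast; ring]
    rw [Int.ceil_le, div_le_iff₀ (by positivity)]
    push_cast
    exact_mod_cast key
end

section
/- Let R be a commutative ring, a ≥ 1 an integer, A_0, …, A_{a−1} finite sets indexed by ℤ/a, and S := Σ_{i ∈ ℤ/a} A_i the disjoint union (so elements of S are pairs (u,i) with i ∈ ℤ/a and u ∈ A_i). Let M be an S × S matrix over R whose entry in row (u,i) and column (w,l) is zero whenever i ≠ l + 1 in ℤ/a. If there exists i_0 ∈ ℤ/a with |A_{i_0}| > |A_{i_0+1}|, then det M = 0. -/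
/-- Let `M` be a square matrix over a commutative ring `R` indexed by the disjoint
union `S = Σ_{i ∈ ℤ/a} A_i`, whose entry in row `(u,i)` and column `(w,l)` vanishes
whenever `i ≠ l + 1` in `ℤ/a`. If `|A_{i₀}| > |A_{i₀+1}|` for some `i₀ ∈ ℤ/a`,
then `det M = 0`. -/
theorem det_eq_zero_of_card_decrease (R : Type*) [CommRing R] (a : ℕ) [NeZero a]
    (A : ZMod a → Type*) [∀ i, Fintype (A i)] [∀ i, DecidableEq (A i)]
    (M : Matrix (Σ i : ZMod a, A i) (Σ i : ZMod a, A i) R)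
    (hM : ∀ u w : Σ i : ZMod a, A i, u.1 ≠ w.1 + 1 → M u w = 0)
    (i₀ : ZMod a) (hcard : Fintype.card (A (i₀ + 1)) < Fintype.card (A i₀)) :
    M.det = 0 := by
  rw [Matrix.det_apply]
  apply Finset.sum_eq_zero
  intro σ _
  by_cases h : ∀ w : Σ i : ZMod a, A i, (σ w).1 = w.1 + 1
  · exfalso
    let f : A i₀ → A (i₀ + 1) := fun u => cast (congrArg A (h ⟨i₀, u⟩)) (σ ⟨i₀, u⟩).2
    have key : ∀ u : A i₀, σ ⟨i₀, u⟩ = ⟨i₀ + 1, f u⟩ := by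
      intro u
      apply Sigma.ext (h ⟨i₀, u⟩)
      exact (cast_heq _ _).symm
    have hinj : Function.Injective f := by
      intro u v huv
      have : σ ⟨i₀, u⟩ = σ ⟨i₀, v⟩ := by rw [key u, key v, huv]
      have := σ.injective this
      exact eq_of_heq (Sigma.ext_iff.mp this).2
    exact absurd (Fintype.card_le_of_injective f hinj) (not_le.mpr hcard)
  · push_neg at h
    obtain ⟨w, hw⟩ := h
    have hz : M (σ w) w = 0 := hM _ _ hw
    have : ∏ i : Σ i : ZMod a, A i, M (σ i) i = 0 :=
      Finset.prod_eq_zero (Finset.mem_univ w) hz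
    rw [this, smul_zero]
end

section
/- Let n = 2, let d ≥ 2 be an even integer, and let p be a prime with p ≡ −1 (mod d). Then for every integer i with 0 ≤ i ≤ d: h_{i,1} = 0 if i ≤ d/2, and h_{i,1} = h_{d−i} if d/2 < i ≤ d. -/
lemma Hsum_neg (n d : ℕ) (m : ℤ) (h : m < 0) : Hsum n d m = 0 := if_pos h

lemma hodge_small (d : ℕ) (m : ℤ) (hm : m < 2) : hodge 2 d m = 0 := by
  unfold hodge
  rw [Finset.card_eq_zero, Finset.filter_eq_empty_iff]
  intro u hu
  rw [Fintype.mem_piFinset] at hu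
  have h1 := hu 0
  have h2 := hu 1
  rw [Finset.mem_Icc] at h1 h2
  rw [Fin.sum_univ_two]
  intro h
  omega

lemma Hsum_small (n d : ℕ) (m : ℤ) (h0 : 0 ≤ m) (h1 : m < d) :
    Hsum n d m = hodge n d m := by
  unfold Hsum
  rw [if_neg (not_lt.2 h0), Int.ediv_eq_zero_of_lt h0 h1]
  simp

/-- For `n = 2`, `d` even, and `p ≡ −1 (mod d)`: for `0 ≤ i ≤ d`, the Frobenius
number `h_{i,1} = H_{i−σ_i(0)} − H_{i−d}` equals `0` if `i ≤ d/2`, and equals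
`h_{d−i}` if `d/2 < i ≤ d`.  Here `s` plays the role of `σ_i(0)`, the unique
element of `{1,…,d}` with `p·s ≡ (p−1)·i (mod d)`. -/
theorem frobenius_numbers_neg_one_mod (d p : ℕ) (hd : 2 ≤ d) (hdeven : 2 ∣ d)
    (hp : p.Prime) (hpd : (d : ℤ) ∣ (p : ℤ) + 1) (i : ℤ)
    (hi0 : 0 ≤ i) (hi1 : i ≤ d)
    (s : ℤ) (hs1 : 1 ≤ s) (hs2 : s ≤ d)
    (hs : (d : ℤ) ∣ (p : ℤ) * s - ((p : ℤ) - 1) * i) :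
    (i ≤ (d : ℤ) / 2 → Hsum 2 d (i - s) - Hsum 2 d (i - d) = 0) ∧
    ((d : ℤ) / 2 < i → Hsum 2 d (i - s) - Hsum 2 d (i - d) = hodge 2 d ((d : ℤ) - i)) := by
  have hd0 : (0:ℤ) < d := by exact_mod_cast Nat.lt_of_lt_of_le (by norm_num) hd
  have hd2 : (d:ℤ) / 2 * 2 = d := Int.ediv_mul_cancel (by exact_mod_cast hdeven)
  -- d ∣ s - 2i
  have hdvd : (d:ℤ) ∣ s - 2 * i := by
    have h1 : (d:ℤ) ∣ ((p:ℤ) + 1) * (s - i) := hpd.mul_right _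
    have h2 := h1.sub hs
    have : ((p:ℤ) + 1) * (s - i) - ((p:ℤ) * s - ((p:ℤ) - 1) * i) = s - 2 * i := by ring
    rwa [this] at h2
  obtain ⟨k, hk⟩ := hdvd
  constructor
  · intro hi
    have h2i : 2 * i ≤ d := by linarith [hd2]
    -- show i - s < 0
    have hlt : i - s < 0 := by
      by_contra hcon
      push_neg at hcon
      have hsle : s ≤ i := by linarith
      have hb1 : -(d:ℤ) < (d:ℤ) * k := by linarith
      have hb2 : (d:ℤ) * k ≤ 0 := by linarith
      have hkz : k = 0 := by
        rcases lt_trichotomy k 0 with h | h | h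
        · exfalso; nlinarith
        · exact h
        · exfalso; nlinarith
      rw [hkz] at hk
      linarith
    rw [Hsum_neg 2 d _ hlt]
    rcases eq_or_lt_of_le hi1 with heq | hlt2
    · rw [heq]
      simp only [sub_self]
      rw [Hsum_small 2 d 0 le_rfl hd0, hodge_small d 0 (by norm_num)]
      simp
    · rw [Hsum_neg 2 d _ (by linarith)]; ring
  · intro hi
    have h2i : (d:ℤ) + 2 ≤ 2 * i := by
      have : (d:ℤ) / 2 + 1 ≤ i := hi
      linarith [hd2]
    -- k = -1, s = 2i - d
    have hkm : k = -1 := by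
      have hb1 : (d:ℤ) * k ≤ -2 := by linarith
      have hb2 : -(2 * (d:ℤ)) < (d:ℤ) * k := by linarith
      rcases lt_trichotomy k (-1) with h | h | h
      · exfalso; nlinarith
      · exact h
      · exfalso
        have : 0 ≤ k := by omega
        nlinarith
    rw [hkm] at hk
    have hse : s = 2 * i - d := by linarith
    have heq1 : i - s = (d:ℤ) - i := by rw [hse]; ring
    rw [heq1, Hsum_small 2 d _ (by linarith) (by linarith)]
    rcases eq_or_lt_of_le hi1 with heq | hlt2
    · rw [← heq]
      simp only [sub_self]
      rw [Hsum_small 2 d 0 le_rfl hd0, hodge_small d 0 (by norm_num)]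
      simp
    · rw [Hsum_neg 2 d _ (by linarith)]
      ring
end
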